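/- arXiv:1510.05380 — 4 statements merged into one kernel-verified Lean document; each statement's English description precedes it below -/
import Mathlib

section
/- (Lemma 3.1, existence part.) Let S0 be a q×q real matrix with spectral radius L = ρ(S0) > 0, and let H be an N×N real matrix such that 0 is not a complex eigenvalue of H. For each complex eigenvalue h of H, write a = Re h, b = Im h, and Δ(h) = (a²+b²)/L² − b². Then there exists a real number μ such that the matrix I_N⊗S0 − μ(H⊗S0) is Schur if and only if (i) Δ(h) > 0 for every complex eigenvalue h of H, and (ii) the maximum over the complex eigenvalues h of H of (Re h − √Δ(h))/|h|² is strictly less than the minimum over the complex eigenvalues h of H of (Re h + √Δ(h))/|h|². -/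
open Matrix Kronecker

section Aux

variable {n : Type} [Fintype n] [DecidableEq n]

lemma mem_spec_iff_det (M : Matrix n n ℂ) (z : ℂ) :
    z ∈ spectrum ℂ M ↔ (z • (1 : Matrix n n ℂ) - M).det = 0 := by
  rw [spectrum.mem_iff, Matrix.isUnit_iff_isUnit_det, isUnit_iff_ne_zero, not_ne_iff,
    Algebra.algebraMap_eq_smul_one]

lemma mem_spec_iff_vec (M : Matrix n n ℂ) (z : ℂ) :
    z ∈ spectrum ℂ M ↔ ∃ v : n → ℂ, v ≠ 0 ∧ M.mulVec v = z • v := by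
  rw [mem_spec_iff_det, ← Matrix.exists_mulVec_eq_zero_iff]
  constructor
  · rintro ⟨v, hv, h⟩
    refine ⟨v, hv, ?_⟩
    rw [Matrix.sub_mulVec, Matrix.smul_mulVec, Matrix.one_mulVec, sub_eq_zero] at h
    exact h.symm
  · rintro ⟨v, hv, h⟩
    exact ⟨v, hv, by rw [Matrix.sub_mulVec, Matrix.smul_mulVec, Matrix.one_mulVec, h, sub_self]⟩

lemma spec_nonempty [Nonempty n] (M : Matrix n n ℂ) : (spectrum ℂ M).Nonempty := by
  obtain ⟨z, hz⟩ := Module.End.exists_eigenvalue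
    ((Matrix.toLinAlgEquiv (Pi.basisFun ℂ n)) M)
  exact ⟨z, (AlgEquiv.spectrum_eq (Matrix.toLinAlgEquiv (Pi.basisFun ℂ n)) M) ▸ hz.mem_spectrum⟩

variable {m : Type} [Fintype m] [DecidableEq m]

lemma prod_mem_spec_kron {A : Matrix n n ℂ} {B : Matrix m m ℂ} {x y : ℂ}
    (hx : x ∈ spectrum ℂ A) (hy : y ∈ spectrum ℂ B) : x * y ∈ spectrum ℂ (A ⊗ₖ B) := by
  rw [mem_spec_iff_vec] at hx hy ⊢
  obtain ⟨v, hv, hAv⟩ := hx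
  obtain ⟨w, hw, hBw⟩ := hy
  refine ⟨fun p => v p.1 * w p.2, ?_, ?_⟩
  · obtain ⟨i, hi⟩ := Function.ne_iff.mp hv
    obtain ⟨j, hj⟩ := Function.ne_iff.mp hw
    exact Function.ne_iff.mpr ⟨(i, j), mul_ne_zero hi hj⟩
  · funext ⟨i, j⟩
    have h1 := congrFun hAv i
    have h2 := congrFun hBw j
    simp only [Matrix.mulVec, dotProduct, Pi.smul_apply, smul_eq_mul] at h1 h2 ⊢
    rw [Fintype.sum_prod_type]
    simp only [Matrix.kroneckerMap_apply]
    calc ∑ k, ∑ l, A i k * B j l * (v k * w l)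
        = (∑ k, A i k * v k) * (∑ l, B j l * w l) := by
          rw [Finset.sum_mul_sum]; congr 1; funext k; congr 1; funext l; ring
      _ = x * y * (v i * w j) := by rw [h1, h2]; ring

lemma spec_kron_subset [Nonempty n] [Nonempty m] (A : Matrix n n ℂ) (B : Matrix m m ℂ) :
    spectrum ℂ (A ⊗ₖ B) ⊆ {z | ∃ x ∈ spectrum ℂ A, ∃ y ∈ spectrum ℂ B, z = x * y} := by
  intro z hz
  by_cases hz0 : z = 0
  · subst hz0
    rw [spectrum.zero_mem_iff, Matrix.isUnit_iff_isUnit_det, isUnit_iff_ne_zero, not_ne_iff,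
      Matrix.det_kronecker, mul_eq_zero, pow_eq_zero_iff Fintype.card_ne_zero,
      pow_eq_zero_iff Fintype.card_ne_zero] at hz
    rcases hz with hA | hB
    · obtain ⟨y, hy⟩ := spec_nonempty B
      refine ⟨0, ?_, y, hy, (zero_mul y).symm⟩
      rw [spectrum.zero_mem_iff, Matrix.isUnit_iff_isUnit_det, hA]
      exact fun h => h.ne_zero rfl
    · obtain ⟨x, hx⟩ := spec_nonempty A
      refine ⟨x, hx, 0, ?_, (mul_zero x).symm⟩
      rw [spectrum.zero_mem_iff, Matrix.isUnit_iff_isUnit_det, hB]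
      exact fun h => h.ne_zero rfl
  · obtain ⟨u, hu, huv⟩ := (mem_spec_iff_vec _ _).mp hz
    set U : Matrix n m ℂ := Matrix.of fun i j => u (i, j) with hUdef
    have hUne : U ≠ 0 := by
      intro h
      apply hu
      funext p
      have := congrFun (congrFun h p.1) p.2
      simpa [hUdef] using this
    have hrel : A * U * Bᵀ = z • U := by
      ext i j
      have h1 := congrFun huv (i, j)
      simp only [Matrix.mulVec, dotProduct, Pi.smul_apply, smul_eq_mul,
        Fintype.sum_prod_type, Matrix.kroneckerMap_apply] at h1
      simp only [Matrix.mul_apply, Matrix.smul_apply, Matrix.transpose_apply, hUdef,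
        Matrix.of_apply, smul_eq_mul]
      rw [← h1, Finset.sum_comm]
      refine Finset.sum_congr rfl fun x _ => ?_
      rw [Finset.sum_mul]
      exact Finset.sum_congr rfl fun k _ => by ring
    -- the invariant subspace
    let V : Submodule ℂ (Matrix n m ℂ) :=
      { carrier := {W | A * W * Bᵀ = z • W}
        add_mem' := by
          intro a b ha hb
          simp only [Set.mem_setOf_eq] at *
          rw [Matrix.mul_add, Matrix.add_mul, ha, hb, smul_add]
        zero_mem' := by simp
        smul_mem' := by
          intro c a ha
          simp only [Set.mem_setOf_eq] at *
          rw [Matrix.mul_smul, Matrix.smul_mul, ha, smul_comm] }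
    haveI : Nontrivial V := by
      refine nontrivial_of_ne ⟨U, hrel⟩ 0 ?_
      simp [Subtype.ext_iff, hUne]
    let f : V →ₗ[ℂ] V :=
      { toFun := fun W => ⟨A * W.1, by
          have hW : A * W.1 * Bᵀ = z • (W.1) := W.2
          show A * (A * W.1) * Bᵀ = z • (A * W.1)
          rw [Matrix.mul_assoc, hW, Matrix.mul_smul]⟩
        map_add' := by intro a b; simp [Subtype.ext_iff, Matrix.mul_add]
        map_smul' := by intro c a; simp [Subtype.ext_iff, Matrix.mul_smul] }
    obtain ⟨c, hc⟩ := Module.End.exists_eigenvalue f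
    obtain ⟨⟨U₀, hU₀V⟩, hev⟩ := hc.exists_hasEigenvector
    have hU₀ne : U₀ ≠ 0 := by
      intro h; exact hev.2 (by simp [Subtype.ext_iff, h])
    have hAU₀ : A * U₀ = c • U₀ := by
      have := hev.apply_eq_smul
      simpa [f, Subtype.ext_iff] using this
    have hU₀rel : A * U₀ * Bᵀ = z • U₀ := hU₀V
    have hcne : c ≠ 0 := by
      intro h
      rw [hAU₀, h, zero_smul, Matrix.zero_mul] at hU₀rel
      rcases (smul_eq_zero.mp hU₀rel.symm) with h' | h'
      · exact hz0 h'
      · exact hU₀ne h'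
    have hBU₀ : U₀ * Bᵀ = (z / c) • U₀ := by
      have h1 : c • (U₀ * Bᵀ) = z • U₀ := by rw [← Matrix.smul_mul, ← hAU₀, hU₀rel]
      have := congrArg (fun M => c⁻¹ • M) h1
      simpa [smul_smul, inv_mul_cancel₀ hcne, div_eq_inv_mul] using this
    obtain ⟨i0, j0, hij⟩ : ∃ i j, U₀ i j ≠ 0 := by
      by_contra h
      push_neg at h
      exact hU₀ne (by ext i j; simpa using h i j)
    refine ⟨c, ?_, z / c, ?_, by field_simp⟩
    · rw [mem_spec_iff_vec]
      refine ⟨fun i => U₀ i j0, Function.ne_iff.mpr ⟨i0, hij⟩, ?_⟩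
      funext i
      have := congrFun (congrFun hAU₀ i) j0
      simpa [Matrix.mul_apply, Matrix.mulVec, dotProduct] using this
    · rw [mem_spec_iff_vec]
      refine ⟨fun l => U₀ i0 l, Function.ne_iff.mpr ⟨j0, hij⟩, ?_⟩
      funext j
      have := congrFun (congrFun hBU₀ i0) j
      simp only [Matrix.mul_apply, Matrix.transpose_apply, Matrix.smul_apply, smul_eq_mul,
        Matrix.mulVec, dotProduct] at this ⊢
      simp only [Pi.smul_apply, smul_eq_mul]
      rw [← this]
      exact Finset.sum_congr rfl fun l _ => mul_comm _ _

lemma spec_one_sub_smul [Nonempty n] (A : Matrix n n ℂ) (μ : ℂ) :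
    spectrum ℂ ((1 : Matrix n n ℂ) - μ • A) = (fun h => 1 - μ * h) '' spectrum ℂ A := by
  ext s
  constructor
  · intro hs
    obtain ⟨v, hv, hvec⟩ := (mem_spec_iff_vec _ _).mp hs
    rw [Matrix.sub_mulVec, Matrix.one_mulVec, Matrix.smul_mulVec] at hvec
    by_cases hμ : μ = 0
    · obtain ⟨h, hh⟩ := spec_nonempty A
      refine ⟨h, hh, ?_⟩
      have : v = s • v := by rw [← hvec, hμ, zero_smul, sub_zero]
      have hs1 : s = 1 := by
        obtain ⟨i, hi⟩ := Function.ne_iff.mp hv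
        have := congrFun this i
        simp only [Pi.smul_apply, smul_eq_mul] at this
        have h2 : (s - 1) * v i = 0 := by linear_combination -this
        rcases mul_eq_zero.mp h2 with h' | h'
        · exact sub_eq_zero.mp h'
        · exact absurd h' hi
      rw [hμ, hs1]; ring
    · refine ⟨(1 - s) / μ, ?_, by field_simp; ring⟩
      rw [mem_spec_iff_vec]
      refine ⟨v, hv, ?_⟩
      have : μ • (A.mulVec v) = (1 - s) • v := by
        rw [sub_smul, one_smul, ← hvec]; module
      have := congrArg (fun w => μ⁻¹ • w) this
      simpa [smul_smul, inv_mul_cancel₀ hμ, div_eq_inv_mul] using this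
  · rintro ⟨h, hh, rfl⟩
    obtain ⟨v, hv, hvec⟩ := (mem_spec_iff_vec _ _).mp hh
    rw [mem_spec_iff_vec]
    refine ⟨v, hv, ?_⟩
    rw [Matrix.sub_mulVec, Matrix.one_mulVec, Matrix.smul_mulVec, hvec]
    module

lemma map_big (N q : ℕ) (μ : ℝ) (S0 : Matrix (Fin q) (Fin q) ℝ) (H : Matrix (Fin N) (Fin N) ℝ) :
    ((1 : Matrix (Fin N) (Fin N) ℝ) ⊗ₖ S0 - μ • (H ⊗ₖ S0)).map (fun x => (x : ℂ)) =
      ((1 : Matrix (Fin N) (Fin N) ℂ) - (μ : ℂ) • (H.map (fun x => (x : ℂ)))) ⊗ₖ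
        (S0.map (fun x => (x : ℂ))) := by
  ext ⟨i, j⟩ ⟨k, l⟩
  simp only [Matrix.map_apply, Matrix.sub_apply, Matrix.smul_apply, Matrix.kroneckerMap_apply,
    Matrix.one_apply, smul_eq_mul]
  by_cases h : i = k <;> simp [h, Complex.ofReal_mul] <;> ring

lemma key_ineq (L μ a b : ℝ) (hL : 0 < L) (hr : 0 < a ^ 2 + b ^ 2) :
    ((1 - μ * a) ^ 2 + (μ * b) ^ 2) * L ^ 2 < 1 ↔
      (0 < (a ^ 2 + b ^ 2) / L ^ 2 - b ^ 2 ∧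
        (a - Real.sqrt ((a ^ 2 + b ^ 2) / L ^ 2 - b ^ 2)) / (a ^ 2 + b ^ 2) < μ ∧
        μ < (a + Real.sqrt ((a ^ 2 + b ^ 2) / L ^ 2 - b ^ 2)) / (a ^ 2 + b ^ 2)) := by
  have hL2 : (0 : ℝ) < L ^ 2 := by positivity
  have stepA : ((1 - μ * a) ^ 2 + (μ * b) ^ 2) * L ^ 2 < 1 ↔
      (μ * (a ^ 2 + b ^ 2) - a) ^ 2 < (a ^ 2 + b ^ 2) / L ^ 2 - b ^ 2 := by
    constructor
    · intro h
      have h2 : (μ * (a ^ 2 + b ^ 2) - a) ^ 2 * L ^ 2 < (a ^ 2 + b ^ 2) - b ^ 2 * L ^ 2 := by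
        nlinarith [mul_lt_mul_of_pos_left h hr]
      rw [lt_sub_iff_add_lt, lt_div_iff₀ hL2]
      nlinarith [h2]
    · intro h
      rw [lt_sub_iff_add_lt, lt_div_iff₀ hL2] at h
      nlinarith [mul_pos hr hL2, hr, h]
  rw [stepA]
  set D := (a ^ 2 + b ^ 2) / L ^ 2 - b ^ 2 with hDdef
  constructor
  · intro h
    have hD : 0 < D := lt_of_le_of_lt (sq_nonneg _) h
    have hsq : (μ * (a ^ 2 + b ^ 2) - a) ^ 2 < Real.sqrt D ^ 2 := by
      rwa [Real.sq_sqrt hD.le]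
    have h1 : μ * (a ^ 2 + b ^ 2) - a < Real.sqrt D :=
      lt_of_pow_lt_pow_left₀ 2 (Real.sqrt_nonneg _) hsq
    have h2 : -(μ * (a ^ 2 + b ^ 2) - a) < Real.sqrt D :=
      lt_of_pow_lt_pow_left₀ 2 (Real.sqrt_nonneg _) (by rwa [neg_sq])
    refine ⟨hD, ?_, ?_⟩
    · rw [div_lt_iff₀ hr]; linarith
    · rw [lt_div_iff₀ hr]; linarith
  · rintro ⟨hD, h1, h2⟩
    rw [div_lt_iff₀ hr] at h1
    rw [lt_div_iff₀ hr] at h2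
    have := sq_lt_sq' (by linarith : -Real.sqrt D < μ * (a ^ 2 + b ^ 2) - a)
      (by linarith : μ * (a ^ 2 + b ^ 2) - a < Real.sqrt D)
    rwa [Real.sq_sqrt hD.le] at this

lemma abs_mul_L_lt_one (w : ℂ) (L : ℝ) (hL : 0 < L) :
    ‖w‖ * L < 1 ↔ (w.re ^ 2 + w.im ^ 2) * L ^ 2 < 1 := by
  have h1 : ‖w‖ ^ 2 = w.re ^ 2 + w.im ^ 2 := by
    rw [Complex.sq_norm, Complex.normSq_apply]; ring
  have h0 : 0 ≤ ‖w‖ := norm_nonneg _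
  constructor
  · intro h; nlinarith [mul_nonneg h0 hL.le]
  · intro h; nlinarith [mul_nonneg h0 hL.le]

end Aux

/-- The complex eigenvalues (spectrum of the complexification) of a real square matrix. -/
def specC {ι : Type} [Fintype ι] [DecidableEq ι] (M : Matrix ι ι ℝ) : Set ℂ :=
  spectrum ℂ (M.map (fun x => (x : ℂ)))

/-- A real square matrix is Schur if all its complex eigenvalues have modulus `< 1`. -/
def IsSchur {ι : Type} [Fintype ι] [DecidableEq ι] (M : Matrix ι ι ℝ) : Prop :=
  ∀ z ∈ specC M, ‖z‖ < 1

/-- **Lemma 3.1, existence part.** With `L = ρ(S0) > 0`, `0 ∉ σ(H)` and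
`Δ(h) = (Re h² + Im h²)/L² − (Im h)²`, there is a real `μ` making
`I_N ⊗ S0 − μ (H ⊗ S0)` Schur iff `Δ(h) > 0` for every complex eigenvalue `h` of `H`
and `max_h (Re h − √Δ(h))/|h|² < min_h (Re h + √Δ(h))/|h|²`. -/
theorem observer_gain_exists_iff (N q : ℕ) (hN : 0 < N) (hq : 0 < q)
    (S0 : Matrix (Fin q) (Fin q) ℝ) (H : Matrix (Fin N) (Fin N) ℝ)
    (L : ℝ) (hL : IsGreatest ((fun z : ℂ => ‖z‖) '' specC S0) L) (hLpos : 0 < L)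
    (hH0 : (0 : ℂ) ∉ specC H) :
    (∃ μ : ℝ, IsSchur ((1 : Matrix (Fin N) (Fin N) ℝ) ⊗ₖ S0 - μ • (H ⊗ₖ S0))) ↔
      ((∀ h ∈ specC H, 0 < (h.re ^ 2 + h.im ^ 2) / L ^ 2 - h.im ^ 2) ∧
        sSup ((fun h : ℂ =>
            (h.re - Real.sqrt ((h.re ^ 2 + h.im ^ 2) / L ^ 2 - h.im ^ 2)) /
              (h.re ^ 2 + h.im ^ 2)) '' specC H) <
          sInf ((fun h : ℂ =>
            (h.re + Real.sqrt ((h.re ^ 2 + h.im ^ 2) / L ^ 2 - h.im ^ 2)) /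
              (h.re ^ 2 + h.im ^ 2)) '' specC H)) := by
  haveI : Nonempty (Fin N) := Fin.pos_iff_nonempty.mp hN
  haveI : Nonempty (Fin q) := Fin.pos_iff_nonempty.mp hq
  have hspecCH : specC H = spectrum ℂ (H.map (fun x => (x : ℂ))) := rfl
  have hHne : (specC H).Nonempty := spec_nonempty _
  have hHfin : (specC H).Finite := Matrix.finite_spectrum _
  have hpos : ∀ h ∈ specC H, 0 < h.re ^ 2 + h.im ^ 2 := by
    intro h hh
    rcases lt_or_eq_of_le (by positivity : (0:ℝ) ≤ h.re ^ 2 + h.im ^ 2) with h' | h'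
    · exact h'
    · exfalso; apply hH0
      have hre : h.re = 0 := by nlinarith [sq_nonneg h.re, sq_nonneg h.im]
      have him : h.im = 0 := by nlinarith [sq_nonneg h.re, sq_nonneg h.im]
      have h0 : h = 0 := Complex.ext hre him
      rwa [← h0]
  set l : ℂ → ℝ := fun h : ℂ =>
    (h.re - Real.sqrt ((h.re ^ 2 + h.im ^ 2) / L ^ 2 - h.im ^ 2)) / (h.re ^ 2 + h.im ^ 2)
    with hldef
  set r : ℂ → ℝ := fun h : ℂ =>
    (h.re + Real.sqrt ((h.re ^ 2 + h.im ^ 2) / L ^ 2 - h.im ^ 2)) / (h.re ^ 2 + h.im ^ 2)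
    with hrdef
  have hiff : ∀ μ : ℝ, IsSchur ((1 : Matrix (Fin N) (Fin N) ℝ) ⊗ₖ S0 - μ • (H ⊗ₖ S0)) ↔
      ∀ h ∈ specC H,
        0 < (h.re ^ 2 + h.im ^ 2) / L ^ 2 - h.im ^ 2 ∧ l h < μ ∧ μ < r h := by
    intro μ
    have hspec : specC ((1 : Matrix (Fin N) (Fin N) ℝ) ⊗ₖ S0 - μ • (H ⊗ₖ S0)) =
        {z | ∃ x ∈ spectrum ℂ
            ((1 : Matrix (Fin N) (Fin N) ℂ) - (μ : ℂ) • (H.map (fun x => (x : ℂ)))),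
          ∃ y ∈ specC S0, z = x * y} := by
      show spectrum ℂ _ = _
      rw [map_big]
      refine Set.Subset.antisymm (spec_kron_subset _ _) ?_
      rintro z ⟨x, hx, y, hy, rfl⟩
      exact prod_mem_spec_kron hx hy
    constructor
    · intro hS h hh
      have habs : ‖1 - (μ : ℂ) * h‖ * L < 1 := by
        obtain ⟨s, hs, hsabs⟩ := hL.1
        have hmem : (1 - (μ : ℂ) * h) ∈ spectrum ℂ
            ((1 : Matrix (Fin N) (Fin N) ℂ) - (μ : ℂ) • (H.map (fun x => (x : ℂ)))) := by
          rw [spec_one_sub_smul]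
          exact ⟨h, hh, rfl⟩
        have hz : (1 - (μ : ℂ) * h) * s ∈
            specC ((1 : Matrix (Fin N) (Fin N) ℝ) ⊗ₖ S0 - μ • (H ⊗ₖ S0)) := by
          rw [hspec]
          exact ⟨1 - (μ : ℂ) * h, hmem, s, hs, rfl⟩
        have := hS _ hz
        rwa [norm_mul, show ‖s‖ = L from hsabs] at this
      have hkey := (abs_mul_L_lt_one _ L hLpos).mp habs
      have hre : ((1 : ℂ) - (μ : ℂ) * h).re = 1 - μ * h.re := by simp
      have him : ((1 : ℂ) - (μ : ℂ) * h).im = -(μ * h.im) := by simp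
      rw [hre, him, neg_sq] at hkey
      have := (key_ineq L μ h.re h.im hLpos (hpos h hh)).mp hkey
      simpa [hldef, hrdef] using this
    · intro hcond z hz
      rw [hspec] at hz
      obtain ⟨x, hx, y, hy, rfl⟩ := hz
      rw [spec_one_sub_smul] at hx
      obtain ⟨h, hh, rfl⟩ := hx
      obtain ⟨hD, h1, h2⟩ := hcond h hh
      have hkey : ((1 - μ * h.re) ^ 2 + (μ * h.im) ^ 2) * L ^ 2 < 1 := by
        refine (key_ineq L μ h.re h.im hLpos (hpos h hh)).mpr ⟨hD, ?_, ?_⟩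
        · simpa [hldef] using h1
        · simpa [hrdef] using h2
      have habs : ‖1 - (μ : ℂ) * h‖ * L < 1 := by
        refine (abs_mul_L_lt_one _ L hLpos).mpr ?_
        have hre : ((1 : ℂ) - (μ : ℂ) * h).re = 1 - μ * h.re := by simp
        have him : ((1 : ℂ) - (μ : ℂ) * h).im = -(μ * h.im) := by simp
        rw [hre, him, neg_sq]
        exact hkey
      have hyL : ‖y‖ ≤ L := hL.2 ⟨y, hy, rfl⟩
      show ‖(1 - (μ : ℂ) * h) * y‖ < 1
      rw [norm_mul]
      calc ‖1 - (μ : ℂ) * h‖ * ‖y‖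
          ≤ ‖1 - (μ : ℂ) * h‖ * L :=
            mul_le_mul_of_nonneg_left hyL (norm_nonneg _)
        _ < 1 := habs
  constructor
  · rintro ⟨μ, hμ⟩
    rw [hiff μ] at hμ
    refine ⟨fun h hh => (hμ h hh).1, ?_⟩
    obtain ⟨h0, hh0, heq0⟩ := (hHne.image l).csSup_mem (hHfin.image l)
    obtain ⟨h1, hh1, heq1⟩ := (hHne.image r).csInf_mem (hHfin.image r)
    rw [← heq0, ← heq1]
    exact lt_trans (hμ h0 hh0).2.1 (hμ h1 hh1).2.2
  · rintro ⟨hD, hlt⟩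
    refine ⟨(sSup (l '' specC H) + sInf (r '' specC H)) / 2, (hiff _).mpr ?_⟩
    intro h hh
    have hub : l h ≤ sSup (l '' specC H) := le_csSup (hHfin.image l).bddAbove ⟨h, hh, rfl⟩
    have hlb : sInf (r '' specC H) ≤ r h := csInf_le (hHfin.image r).bddBelow ⟨h, hh, rfl⟩
    exact ⟨hD h hh, by linarith, by linarith⟩
end

section
/- (Corollary 3.1, case (i).) Let S0 be a q×q real matrix with spectral radius L = ρ(S0) > 0, and let H be an N×N real symmetric positive definite matrix. Then there exists a real μ such that the matrix I_N⊗S0 − μ(H⊗S0) is Schur if and only if the maximum over the (real, positive) eigenvalues a of H of (L−1)/(aL) is strictly less than the minimum over the eigenvalues a of H of (L+1)/(aL); and when this condition holds, I_N⊗S0 − μ(H⊗S0) is Schur for every real μ with max_a (L−1)/(aL) < μ < min_a (L+1)/(aL). -/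
open Matrix Kronecker

noncomputable def mapC {ι : Type} [Fintype ι] (M : Matrix ι ι ℝ) : Matrix ι ι ℂ :=
  M.map (fun x => (x : ℂ))

lemma mem_spectrum_iff_det {n : Type} [Fintype n] [DecidableEq n] (M : Matrix n n ℂ) (z : ℂ) :
    z ∈ spectrum ℂ M ↔ (z • (1 : Matrix n n ℂ) - M).det = 0 := by
  rw [spectrum.mem_iff, Matrix.isUnit_iff_isUnit_det]
  simp [Algebra.algebraMap_eq_smul_one, isUnit_iff_ne_zero]

lemma spectrum_diag_kron {N q : ℕ} (d : Fin N → ℂ) (B : Matrix (Fin q) (Fin q) ℂ) (z : ℂ) :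
    z ∈ spectrum ℂ ((Matrix.diagonal d) ⊗ₖ B) ↔ ∃ i, z ∈ spectrum ℂ (d i • B) := by
  rw [mem_spectrum_iff_det]
  have key : z • (1 : Matrix (Fin N × Fin q) (Fin N × Fin q) ℂ) - (Matrix.diagonal d) ⊗ₖ B
      = (Matrix.blockDiagonal (fun i => z • (1 : Matrix (Fin q) (Fin q) ℂ) - d i • B)).submatrix
        (Equiv.prodComm (Fin N) (Fin q)) (Equiv.prodComm (Fin N) (Fin q)) := by
    ext ⟨i, k⟩ ⟨j, l⟩
    by_cases h : i = j <;>
      simp [Matrix.blockDiagonal_apply, Matrix.kroneckerMap_apply, Matrix.one_apply,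
        Matrix.diagonal_apply, h, Prod.ext_iff]
  rw [key, Matrix.det_submatrix_equiv_self, Matrix.det_blockDiagonal]
  rw [Finset.prod_eq_zero_iff]
  constructor
  · rintro ⟨i, -, h⟩; exact ⟨i, (mem_spectrum_iff_det _ _).2 h⟩
  · rintro ⟨i, h⟩; exact ⟨i, Finset.mem_univ i, (mem_spectrum_iff_det _ _).1 h⟩

lemma mem_spectrum_smul {q : ℕ} (hq : 0 < q) (c : ℂ) (B : Matrix (Fin q) (Fin q) ℂ)
    (hB : (spectrum ℂ B).Nonempty) (z : ℂ) :
    z ∈ spectrum ℂ (c • B) ↔ ∃ s ∈ spectrum ℂ B, z = c * s := by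
  haveI : Nontrivial (Matrix (Fin q) (Fin q) ℂ) :=
    ⟨0, 1, fun h => one_ne_zero (congrFun (congrFun h.symm ⟨0, hq⟩) ⟨0, hq⟩)⟩
  rw [spectrum.smul_eq_smul c B hB]
  constructor
  · rintro ⟨s, hs, rfl⟩; exact ⟨s, hs, rfl⟩
  · rintro ⟨s, hs, rfl⟩; exact ⟨s, hs, rfl⟩

lemma mapC_mul {ι : Type} [Fintype ι] (A B : Matrix ι ι ℝ) :
    mapC (A * B) = mapC A * mapC B := by
  ext i j
  simp [mapC, Matrix.map_apply, Matrix.mul_apply]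

lemma mapC_one {ι : Type} [Fintype ι] [DecidableEq ι] :
    mapC (1 : Matrix ι ι ℝ) = 1 := by
  ext i j
  simp [mapC, Matrix.map_apply, Matrix.one_apply, apply_ite (fun x : ℝ => (x : ℂ))]

lemma mapC_diagonal {ι : Type} [Fintype ι] [DecidableEq ι] (d : ι → ℝ) :
    mapC (Matrix.diagonal d) = Matrix.diagonal (fun i => (d i : ℂ)) := by
  ext i j
  by_cases h : i = j <;> simp [mapC, Matrix.map_apply, Matrix.diagonal_apply, h]

lemma mapC_kron {N q : ℕ} (A : Matrix (Fin N) (Fin N) ℝ) (B : Matrix (Fin q) (Fin q) ℝ) :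
    mapC (A ⊗ₖ B) = mapC A ⊗ₖ mapC B := by
  ext ⟨i, k⟩ ⟨j, l⟩
  simp [mapC, Matrix.map_apply, Matrix.kroneckerMap_apply]

lemma exists_unit_conj {N : ℕ} (H : Matrix (Fin N) (Fin N) ℝ) (hH : H.IsHermitian) :
    ∃ u : (Matrix (Fin N) (Fin N) ℂ)ˣ,
      mapC H = (u : Matrix (Fin N) (Fin N) ℂ) * Matrix.diagonal (fun i => (hH.eigenvalues i : ℂ))
        * ((u⁻¹ : (Matrix (Fin N) (Fin N) ℂ)ˣ) : Matrix (Fin N) (Fin N) ℂ) := by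
  set U : Matrix (Fin N) (Fin N) ℝ :=
    (Matrix.IsHermitian.eigenvectorUnitary hH : Matrix (Fin N) (Fin N) ℝ) with hU
  have h1 : U * star U = 1 :=
    (Matrix.mem_unitaryGroup_iff).mp (Matrix.IsHermitian.eigenvectorUnitary hH).2
  have h2 : star U * U = 1 :=
    (Matrix.mem_unitaryGroup_iff').mp (Matrix.IsHermitian.eigenvectorUnitary hH).2
  refine ⟨⟨mapC U, mapC (star U), by rw [← mapC_mul, h1, mapC_one],
    by rw [← mapC_mul, h2, mapC_one]⟩, ?_⟩
  simp only [Units.inv_mk]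
  show mapC H = mapC U * Matrix.diagonal (fun i => (hH.eigenvalues i : ℂ)) * mapC (star U)
  conv_lhs => rw [hH.spectral_theorem]
  rw [Unitary.conjStarAlgAut_apply, mapC_mul, mapC_mul, mapC_diagonal]
  norm_num
  rfl

lemma specC_H_eq {N : ℕ} (H : Matrix (Fin N) (Fin N) ℝ) (hH : H.IsHermitian) :
    specC H = Set.range (fun i => (hH.eigenvalues i : ℂ)) := by
  obtain ⟨u, hu⟩ := exists_unit_conj H hH
  have : specC H = spectrum ℂ (mapC H) := rfl
  rw [this, hu, spectrum.units_conjugate, spectrum_diagonal]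

lemma key_spec {N q : ℕ} (hq : 0 < q) (S0 : Matrix (Fin q) (Fin q) ℝ)
    (H : Matrix (Fin N) (Fin N) ℝ) (hH : H.IsHermitian) (hS : (specC S0).Nonempty)
    (μ : ℝ) (z : ℂ) :
    z ∈ specC ((1 : Matrix (Fin N) (Fin N) ℝ) ⊗ₖ S0 - μ • (H ⊗ₖ S0)) ↔
      ∃ i, ∃ s ∈ specC S0, z = (1 - (μ : ℂ) * (hH.eigenvalues i : ℂ)) * s := by
  have step1 : (1 : Matrix (Fin N) (Fin N) ℝ) ⊗ₖ S0 - μ • (H ⊗ₖ S0)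
      = ((1 : Matrix (Fin N) (Fin N) ℝ) - μ • H) ⊗ₖ S0 := by
    ext ⟨i, k⟩ ⟨j, l⟩
    simp [Matrix.kroneckerMap_apply, Matrix.sub_apply, Matrix.smul_apply, sub_mul, mul_assoc]
  have step2 : mapC ((1 : Matrix (Fin N) (Fin N) ℝ) - μ • H)
      = (1 : Matrix (Fin N) (Fin N) ℂ) - (μ : ℂ) • mapC H := by
    ext i j
    simp [mapC, Matrix.map_apply, Matrix.sub_apply, Matrix.smul_apply, Matrix.one_apply,
      apply_ite (fun x : ℝ => (x : ℂ))]
  obtain ⟨u, hu⟩ := exists_unit_conj H hH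
  set e := hH.eigenvalues with he
  have step3 : (1 : Matrix (Fin N) (Fin N) ℂ) - (μ : ℂ) • mapC H
      = (u : Matrix (Fin N) (Fin N) ℂ)
        * Matrix.diagonal (fun i => 1 - (μ : ℂ) * (e i : ℂ))
        * ((u⁻¹ : (Matrix (Fin N) (Fin N) ℂ)ˣ) : Matrix (Fin N) (Fin N) ℂ) := by
    have hd : Matrix.diagonal (fun i => 1 - (μ : ℂ) * (e i : ℂ))
        = (1 : Matrix (Fin N) (Fin N) ℂ)
          - (μ : ℂ) • Matrix.diagonal (fun i => (e i : ℂ)) := by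
      ext i j
      by_cases h : i = j <;> simp [Matrix.diagonal_apply, Matrix.one_apply, h]
    rw [hd, hu, mul_sub, sub_mul, mul_one, Units.mul_inv, mul_smul_comm, smul_mul_assoc]
  have hbig : mapC ((1 : Matrix (Fin N) (Fin N) ℝ) ⊗ₖ S0 - μ • (H ⊗ₖ S0))
      = ((u : Matrix (Fin N) (Fin N) ℂ)
        * Matrix.diagonal (fun i => 1 - (μ : ℂ) * (e i : ℂ))
        * ((u⁻¹ : (Matrix (Fin N) (Fin N) ℂ)ˣ) : Matrix (Fin N) (Fin N) ℂ)) ⊗ₖ mapC S0 := by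
    rw [step1, mapC_kron, step2, step3]
  -- kronecker unit
  set w : (Matrix (Fin N × Fin q) (Fin N × Fin q) ℂ)ˣ :=
    ⟨(u : Matrix (Fin N) (Fin N) ℂ) ⊗ₖ (1 : Matrix (Fin q) (Fin q) ℂ),
     ((u⁻¹ : (Matrix (Fin N) (Fin N) ℂ)ˣ) : Matrix (Fin N) (Fin N) ℂ) ⊗ₖ (1 : Matrix (Fin q) (Fin q) ℂ),
     by rw [← Matrix.mul_kronecker_mul, Units.mul_inv, mul_one, Matrix.one_kronecker_one],
     by rw [← Matrix.mul_kronecker_mul, Units.inv_mul, mul_one, Matrix.one_kronecker_one]⟩ with hw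
  have hconj : ((u : Matrix (Fin N) (Fin N) ℂ)
        * Matrix.diagonal (fun i => 1 - (μ : ℂ) * (e i : ℂ))
        * ((u⁻¹ : (Matrix (Fin N) (Fin N) ℂ)ˣ) : Matrix (Fin N) (Fin N) ℂ)) ⊗ₖ mapC S0
      = (w : Matrix (Fin N × Fin q) (Fin N × Fin q) ℂ)
        * ((Matrix.diagonal (fun i => 1 - (μ : ℂ) * (e i : ℂ))) ⊗ₖ mapC S0)
        * ((w⁻¹ : (Matrix (Fin N × Fin q) (Fin N × Fin q) ℂ)ˣ)
            : Matrix (Fin N × Fin q) (Fin N × Fin q) ℂ) := by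
    simp only [hw, Units.inv_mk]
    show _ = ((u : Matrix (Fin N) (Fin N) ℂ) ⊗ₖ (1 : Matrix (Fin q) (Fin q) ℂ))
      * ((Matrix.diagonal (fun i => 1 - (μ : ℂ) * (e i : ℂ))) ⊗ₖ mapC S0)
      * (((u⁻¹ : (Matrix (Fin N) (Fin N) ℂ)ˣ) : Matrix (Fin N) (Fin N) ℂ)
          ⊗ₖ (1 : Matrix (Fin q) (Fin q) ℂ))
    rw [← Matrix.mul_kronecker_mul, ← Matrix.mul_kronecker_mul, one_mul, mul_one]
  have : specC ((1 : Matrix (Fin N) (Fin N) ℝ) ⊗ₖ S0 - μ • (H ⊗ₖ S0))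
      = spectrum ℂ ((Matrix.diagonal (fun i => 1 - (μ : ℂ) * (e i : ℂ))) ⊗ₖ mapC S0) := by
    show spectrum ℂ (mapC _) = _
    rw [hbig, hconj, spectrum.units_conjugate]
  rw [this, spectrum_diag_kron]
  have hSeq : (spectrum ℂ (mapC S0)).Nonempty := hS
  constructor
  · rintro ⟨i, hi⟩
    rw [mem_spectrum_smul hq _ _ hSeq] at hi
    obtain ⟨s, hs, rfl⟩ := hi
    exact ⟨i, s, hs, rfl⟩
  · rintro ⟨i, s, hs, rfl⟩
    exact ⟨i, (mem_spectrum_smul hq _ _ hSeq _).2 ⟨s, hs, rfl⟩⟩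

lemma arith {L a μ : ℝ} (hL : 0 < L) (ha : 0 < a) :
    |1 - μ * a| * L < 1 ↔ (L - 1) / (a * L) < μ ∧ μ < (L + 1) / (a * L) := by
  have haL : 0 < a * L := mul_pos ha hL
  rw [div_lt_iff₀ haL, lt_div_iff₀ haL]
  rw [show |1 - μ * a| * L = |(1 - μ * a) * L| by rw [abs_mul, abs_of_pos hL], abs_lt]
  constructor
  · rintro ⟨h1, h2⟩; constructor <;> nlinarith
  · rintro ⟨h1, h2⟩; constructor <;> nlinarith

lemma schur_iff {N q : ℕ} (hq : 0 < q) (S0 : Matrix (Fin q) (Fin q) ℝ)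
    (H : Matrix (Fin N) (Fin N) ℝ) (hH : H.IsHermitian)
    (L : ℝ) (hL : IsGreatest ((fun z : ℂ => ‖z‖) '' specC S0) L) (μ : ℝ) :
    IsSchur ((1 : Matrix (Fin N) (Fin N) ℝ) ⊗ₖ S0 - μ • (H ⊗ₖ S0)) ↔
      ∀ i : Fin N, |1 - μ * hH.eigenvalues i| * L < 1 := by
  obtain ⟨s0, hs0, habs⟩ := hL.1
  have hS : (specC S0).Nonempty := ⟨s0, hs0⟩
  have hcast : ∀ i : Fin N, ‖(1 - (μ : ℂ) * (hH.eigenvalues i : ℂ))‖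
      = |1 - μ * hH.eigenvalues i| := by
    intro i
    rw [show ((1 : ℂ) - (μ : ℂ) * (hH.eigenvalues i : ℂ))
        = ((1 - μ * hH.eigenvalues i : ℝ) : ℂ) by push_cast; ring, Complex.norm_real, Real.norm_eq_abs]
  constructor
  · intro hSch i
    have hz := hSch _ ((key_spec hq S0 H hH hS μ _).2 ⟨i, s0, hs0, rfl⟩)
    rwa [norm_mul, show ‖s0‖ = L from habs, hcast i] at hz
  · intro h z hz
    obtain ⟨i, s, hs, rfl⟩ := (key_spec hq S0 H hH hS μ z).1 hz
    calc ‖_‖ = |1 - μ * hH.eigenvalues i| * ‖s‖ := by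
          rw [norm_mul, hcast i]
      _ ≤ |1 - μ * hH.eigenvalues i| * L :=
          mul_le_mul_of_nonneg_left (hL.2 ⟨s, hs, rfl⟩) (abs_nonneg _)
      _ < 1 := h i

/-- **Corollary 3.1, case (i).** With `L = ρ(S0) > 0` and `H` real symmetric
positive definite, a real `μ` making `I_N ⊗ S0 − μ (H ⊗ S0)` Schur exists iff
`max_a (L−1)/(aL) < min_a (L+1)/(aL)`, the max and min ranging over the (real, positive)
eigenvalues `a` of `H`; and when this condition holds, the matrix is Schur for every `μ`
strictly between this max and this min. -/
theorem observer_gain_undirected (N q : ℕ) (hN : 0 < N) (hq : 0 < q)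
    (S0 : Matrix (Fin q) (Fin q) ℝ) (H : Matrix (Fin N) (Fin N) ℝ)
    (L : ℝ) (hL : IsGreatest ((fun z : ℂ => ‖z‖) '' specC S0) L) (hLpos : 0 < L)
    (hsymm : H.IsSymm) (hpd : H.PosDef) :
    ((∃ μ : ℝ, IsSchur ((1 : Matrix (Fin N) (Fin N) ℝ) ⊗ₖ S0 - μ • (H ⊗ₖ S0))) ↔
      sSup ((fun a : ℝ => (L - 1) / (a * L)) '' {a : ℝ | (a : ℂ) ∈ specC H}) <
        sInf ((fun a : ℝ => (L + 1) / (a * L)) '' {a : ℝ | (a : ℂ) ∈ specC H})) ∧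
    (sSup ((fun a : ℝ => (L - 1) / (a * L)) '' {a : ℝ | (a : ℂ) ∈ specC H}) <
        sInf ((fun a : ℝ => (L + 1) / (a * L)) '' {a : ℝ | (a : ℂ) ∈ specC H}) →
      ∀ μ : ℝ,
        sSup ((fun a : ℝ => (L - 1) / (a * L)) '' {a : ℝ | (a : ℂ) ∈ specC H}) < μ →
        μ < sInf ((fun a : ℝ => (L + 1) / (a * L)) '' {a : ℝ | (a : ℂ) ∈ specC H}) →
        IsSchur ((1 : Matrix (Fin N) (Fin N) ℝ) ⊗ₖ S0 - μ • (H ⊗ₖ S0))) := by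
  haveI : Nonempty (Fin N) := Fin.pos_iff_nonempty.mp hN
  set e := hpd.1.eigenvalues with he
  have hepos : ∀ i, 0 < e i := fun i => hpd.eigenvalues_pos i
  have hset : {a : ℝ | (a : ℂ) ∈ specC H} = Set.range e := by
    ext a
    simp only [Set.mem_setOf_eq, specC_H_eq H hpd.1, Set.mem_range]
    constructor
    · rintro ⟨i, hi⟩; exact ⟨i, by exact_mod_cast hi⟩
    · rintro ⟨i, rfl⟩; exact ⟨i, rfl⟩
  have hlo : ((fun a : ℝ => (L - 1) / (a * L)) '' {a : ℝ | (a : ℂ) ∈ specC H})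
      = Set.range (fun i => (L - 1) / (e i * L)) := by
    rw [hset, ← Set.range_comp]; rfl
  have hhi : ((fun a : ℝ => (L + 1) / (a * L)) '' {a : ℝ | (a : ℂ) ∈ specC H})
      = Set.range (fun i => (L + 1) / (e i * L)) := by
    rw [hset, ← Set.range_comp]; rfl
  have hsup : ∀ μ : ℝ,
      sSup ((fun a : ℝ => (L - 1) / (a * L)) '' {a : ℝ | (a : ℂ) ∈ specC H}) < μ
        ↔ ∀ i, (L - 1) / (e i * L) < μ := by
    intro μ
    rw [hlo, (Set.finite_range _).csSup_lt_iff (Set.range_nonempty _)]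
    simp
  have hinf : ∀ μ : ℝ,
      μ < sInf ((fun a : ℝ => (L + 1) / (a * L)) '' {a : ℝ | (a : ℂ) ∈ specC H})
        ↔ ∀ i, μ < (L + 1) / (e i * L) := by
    intro μ
    rw [hhi, (Set.finite_range _).lt_csInf_iff (Set.range_nonempty _)]
    simp
  have hiff : ∀ μ : ℝ,
      IsSchur ((1 : Matrix (Fin N) (Fin N) ℝ) ⊗ₖ S0 - μ • (H ⊗ₖ S0)) ↔
        (sSup ((fun a : ℝ => (L - 1) / (a * L)) '' {a : ℝ | (a : ℂ) ∈ specC H}) < μ ∧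
          μ < sInf ((fun a : ℝ => (L + 1) / (a * L)) '' {a : ℝ | (a : ℂ) ∈ specC H})) := by
    intro μ
    rw [schur_iff hq S0 H hpd.1 L hL μ, hsup μ, hinf μ]
    constructor
    · intro h
      exact ⟨fun i => ((arith hLpos (hepos i)).1 (h i)).1,
        fun i => ((arith hLpos (hepos i)).1 (h i)).2⟩
    · rintro ⟨h1, h2⟩ i
      exact (arith hLpos (hepos i)).2 ⟨h1 i, h2 i⟩
  refine ⟨⟨?_, ?_⟩, ?_⟩
  · rintro ⟨μ, hμ⟩
    obtain ⟨a, b⟩ := (hiff μ).1 hμ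
    exact lt_trans a b
  · intro h
    refine ⟨(sSup ((fun a : ℝ => (L - 1) / (a * L)) '' {a : ℝ | (a : ℂ) ∈ specC H}) +
      sInf ((fun a : ℝ => (L + 1) / (a * L)) '' {a : ℝ | (a : ℂ) ∈ specC H})) / 2,
      (hiff _).2 ⟨by linarith, by linarith⟩⟩
  · intro h μ h1 h2
    exact (hiff μ).2 ⟨h1, h2⟩
end

section
/- Let S0 be the 2×2 real matrix diag(1, −1) and let H be any N×N real symmetric positive definite matrix. Then for every real number μ, the matrix I_N⊗S0 − μ(H⊗I_2) has a complex eigenvalue of modulus at least 1; that is, there is no real μ for which I_N⊗S0 − μ(H⊗I_2) is Schur. -/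
open Matrix Kronecker

lemma mem_specC_of_eigen {ι : Type} [Fintype ι] [DecidableEq ι] (M : Matrix ι ι ℝ)
    (z : ℂ) (v : ι → ℂ) (hv : v ≠ 0)
    (h : (M.map (fun x => (x : ℂ))) *ᵥ v = z • v) : z ∈ specC M := by
  rw [specC, ← AlgEquiv.spectrum_eq (Matrix.toLinAlgEquiv' : Matrix ι ι ℂ ≃ₐ[ℂ] _),
    ← Module.End.hasEigenvalue_iff_mem_spectrum]
  exact Module.End.hasEigenvalue_of_hasEigenvector
    ⟨Module.End.mem_eigenspace_iff.mpr (by simpa [Matrix.toLinAlgEquiv'_apply,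
      Matrix.toLin'_apply] using h), hv⟩

/-- For `S0 = diag(1, −1)` and any real symmetric positive definite `H`,
for every real `μ` the matrix `I_N ⊗ S0 − μ (H ⊗ I_2)` has a complex eigenvalue of
modulus at least `1`; i.e. no gain `μ` makes it Schur. -/
theorem naive_observer_never_schur (N : ℕ) (hN : 0 < N)
    (H : Matrix (Fin N) (Fin N) ℝ) (hsymm : H.IsSymm) (hpd : H.PosDef) (μ : ℝ) :
    ∃ z ∈ specC ((1 : Matrix (Fin N) (Fin N) ℝ) ⊗ₖ (Matrix.diagonal ![1, -1]) -
        μ • (H ⊗ₖ (1 : Matrix (Fin 2) (Fin 2) ℝ))),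
      1 ≤ ‖z‖ := by
  haveI : Nonempty (Fin N) := ⟨⟨0, hN⟩⟩
  set Hc : Matrix (Fin N) (Fin N) ℂ := H.map (fun x => (x : ℂ)) with hHc
  obtain ⟨lam, hlam⟩ := Module.End.exists_eigenvalue (Matrix.toLin' Hc)
  obtain ⟨v, hv⟩ := hlam.exists_hasEigenvector
  have hAv : Hc *ᵥ v = lam • v := by
    simpa [Matrix.toLin'_apply] using hv.apply_eq_smul
  have hAvi : ∀ i, (∑ j, ((H i j : ℂ)) * v j) = lam * v i := by
    intro i
    have := congrFun hAv i
    simpa [hHc, Matrix.mulVec, dotProduct, Matrix.map_apply] using this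
  have hvne := hv.2
  set M : Matrix (Fin N × Fin 2) (Fin N × Fin 2) ℝ :=
    (1 : Matrix (Fin N) (Fin N) ℝ) ⊗ₖ (Matrix.diagonal ![1, -1]) -
      μ • (H ⊗ₖ (1 : Matrix (Fin 2) (Fin 2) ℝ)) with hM
  have key : ∀ k : Fin 2, ((![1, -1] k : ℝ) : ℂ) - (μ : ℂ) * lam ∈ specC M := by
    intro k
    apply mem_specC_of_eigen M _ (fun p => if p.2 = k then v p.1 else 0)
    · obtain ⟨i, hi⟩ := Function.ne_iff.mp hvne
      exact Function.ne_iff.mpr ⟨(i, k), by simpa using hi⟩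
    · funext p
      obtain ⟨i, k'⟩ := p
      simp only [Matrix.mulVec, dotProduct, Fintype.sum_prod_type, Matrix.map_apply,
        hM, Matrix.sub_apply, Matrix.smul_apply, Matrix.kroneckerMap_apply, smul_eq_mul,
        mul_ite, mul_zero, Finset.sum_ite_eq', Finset.mem_univ, if_true, Pi.smul_apply]
      by_cases hk : k' = k
      · subst hk
        push_cast
        simp only [Matrix.one_apply, Matrix.diagonal_apply_eq]
        simp only [if_true, Complex.ofReal_one, mul_one]
        have : ∀ j, ((if i = j then (1:ℝ) else 0 : ℝ) : ℂ) * ((![1, -1] k' : ℝ) : ℂ)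
            - (μ : ℂ) * (H i j : ℂ) = (if i = j then ((![1, -1] k' : ℝ) : ℂ) else 0)
            - (μ : ℂ) * (H i j : ℂ) := by
          intro j; split <;> push_cast <;> ring
        calc ∑ j, (((if i = j then (1:ℝ) else 0 : ℝ) : ℂ) * ((![1, -1] k' : ℝ) : ℂ)
              - (μ : ℂ) * (H i j : ℂ)) * v j
            = ∑ j, ((if i = j then ((![1, -1] k' : ℝ) : ℂ) else 0) * v j
              - (μ : ℂ) * ((H i j : ℂ) * v j)) := by
              refine Finset.sum_congr rfl fun j _ => ?_
              rw [this j, sub_mul]; ring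
          _ = ((![1, -1] k' : ℝ) : ℂ) * v i - (μ : ℂ) * (lam * v i) := by
              rw [Finset.sum_sub_distrib, ← Finset.mul_sum, hAvi i]
              simp [ite_mul, Finset.sum_ite_eq]
          _ = (((![1, -1] k' : ℝ) : ℂ) - (μ : ℂ) * lam) * v i := by ring
      · simp [Matrix.one_apply, Matrix.diagonal_apply_ne _ hk, Ne.symm, hk]
  have habs : 1 ≤ ‖1 - (μ : ℂ) * lam‖ ∨ 1 ≤ ‖-1 - (μ : ℂ) * lam‖ := by
    by_contra hcon
    push_neg at hcon
    have htri := norm_sub_le (1 - (μ : ℂ) * lam) (-1 - (μ : ℂ) * lam)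
    have : (1 - (μ : ℂ) * lam) - (-1 - (μ : ℂ) * lam) = 2 := by ring
    rw [this] at htri
    simp only [Complex.norm_two] at htri
    linarith [hcon.1, hcon.2]
  rcases habs with h | h
  · refine ⟨1 - (μ : ℂ) * lam, ?_, h⟩
    simpa using key 0
  · refine ⟨-1 - (μ : ℂ) * lam, ?_, h⟩
    simpa using key 1
end

section
/- Let H be an N×N real symmetric positive definite matrix and let S0 be a q×q real matrix all of whose complex eigenvalues have modulus exactly 1. If there exists a real number μ such that the matrix I_N⊗S0 − μ(H⊗I_q) is Schur, then either every complex eigenvalue of S0 has strictly positive real part, or every complex eigenvalue of S0 has strictly negative real part. -/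
open Matrix Kronecker

lemma aux_mem_spectrum_iff {n : Type} [Fintype n] [DecidableEq n] [Nonempty n]
    (M : Matrix n n ℂ) (z : ℂ) :
    z ∈ spectrum ℂ M ↔ ∃ v : n → ℂ, v ≠ 0 ∧ M.mulVec v = z • v := by
  rw [← AlgEquiv.spectrum_eq (Matrix.toLinAlgEquiv' (R := ℂ) (n := n)) M,
    ← Module.End.hasEigenvalue_iff_mem_spectrum, Module.End.hasEigenvalue_iff,
    Submodule.ne_bot_iff]
  constructor
  · rintro ⟨v, hv, hv0⟩
    refine ⟨v, hv0, ?_⟩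
    have := Module.End.mem_eigenspace_iff.mp hv
    simpa [Matrix.toLinAlgEquiv'_apply] using this
  · rintro ⟨v, hv0, hv⟩
    refine ⟨v, Module.End.mem_eigenspace_iff.mpr ?_, hv0⟩
    simpa [Matrix.toLinAlgEquiv'_apply] using hv

lemma aux_kron_mulVec {m n : Type} [Fintype m] [Fintype n]
    (A : Matrix m m ℂ) (B : Matrix n n ℂ) (x : m → ℂ) (y : n → ℂ) :
    (A ⊗ₖ B).mulVec (fun p => x p.1 * y p.2) =
      fun p => A.mulVec x p.1 * B.mulVec y p.2 := by
  funext p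
  simp only [Matrix.mulVec, dotProduct, kroneckerMap_apply,
    Fintype.sum_prod_type, Finset.mul_sum, Finset.sum_mul]
  rw [Finset.sum_comm]
  congr 1; funext j; congr 1; funext l; ring

/-- Let `H` be real symmetric positive definite and let every complex
eigenvalue of `S0` have modulus exactly `1`. If some real `μ` makes
`I_N ⊗ S0 − μ (H ⊗ I_q)` Schur, then either all complex eigenvalues of `S0` have
strictly positive real part, or all have strictly negative real part. -/
theorem naive_observer_same_sign (N q : ℕ) (hN : 0 < N) (hq : 0 < q)
    (H : Matrix (Fin N) (Fin N) ℝ) (hsymm : H.IsSymm) (hpd : H.PosDef)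
    (S0 : Matrix (Fin q) (Fin q) ℝ)
    (hmod : ∀ lam ∈ specC S0, ‖lam‖ = 1)
    (hex : ∃ μ : ℝ, IsSchur ((1 : Matrix (Fin N) (Fin N) ℝ) ⊗ₖ S0 -
      μ • (H ⊗ₖ (1 : Matrix (Fin q) (Fin q) ℝ)))) :
    (∀ lam ∈ specC S0, 0 < lam.re) ∨ (∀ lam ∈ specC S0, lam.re < 0) := by
  obtain ⟨μ, hμ⟩ := hex
  have hNne : Nonempty (Fin N) := ⟨⟨0, hN⟩⟩
  have hqne : Nonempty (Fin q) := ⟨⟨0, hq⟩⟩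
  -- eigen-pair for H
  have hH : H.IsHermitian := hpd.1
  set i0 : Fin N := ⟨0, hN⟩
  set h : ℝ := hH.eigenvalues i0 with hh
  have hpos : 0 < h := hpd.eigenvalues_pos i0
  set w : Fin N → ℝ := ⇑(hH.eigenvectorBasis i0) with hw
  have hwne : w ≠ 0 := by rw [hw]; simpa using hH.eigenvectorBasis.orthonormal.ne_zero i0
  have hweig : H.mulVec w = h • w := hH.mulVec_eigenvectorBasis i0
  -- complexified eigenvector of H
  set wC : Fin N → ℂ := fun i => (w i : ℂ) with hwC
  have hwCne : wC ≠ 0 := by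
    intro hcon
    apply hwne
    funext i
    have := congrFun hcon i
    simpa [hwC] using this
  have hweigC : (H.map (fun x => (x : ℂ))).mulVec wC = (h : ℂ) • wC := by
    funext i
    have := congrFun hweig i
    simp only [Matrix.mulVec, dotProduct, Pi.smul_apply, smul_eq_mul] at this ⊢
    simp only [Matrix.map_apply, hwC]
    push_cast
    exact_mod_cast congrArg (fun r : ℝ => (r : ℂ)) this
  -- the key claim: for every lam in specC S0, lam - μ*h is in specC of the big matrix
  have key : ∀ lam ∈ specC S0, (lam - (μ : ℂ) * (h : ℂ)) ∈
      specC ((1 : Matrix (Fin N) (Fin N) ℝ) ⊗ₖ S0 -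
        μ • (H ⊗ₖ (1 : Matrix (Fin q) (Fin q) ℝ))) := by
    intro lam hlam
    rw [specC, aux_mem_spectrum_iff] at hlam ⊢
    obtain ⟨v, hvne, hveig⟩ := hlam
    refine ⟨fun p => wC p.1 * v p.2, ?_, ?_⟩
    · intro hcon
      obtain ⟨i, hi⟩ : ∃ i, wC i ≠ 0 := by
        by_contra hall
        push_neg at hall
        exact hwCne (funext hall)
      obtain ⟨j, hj⟩ : ∃ j, v j ≠ 0 := by
        by_contra hall
        push_neg at hall
        exact hvne (funext hall)
      have := congrFun hcon (i, j)
      simp only [Pi.zero_apply] at this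
      exact (mul_ne_zero hi hj) this
    · -- rewrite the mapped matrix as a difference of Kronecker products over ℂ
      have hmap : (((1 : Matrix (Fin N) (Fin N) ℝ) ⊗ₖ S0 -
          μ • (H ⊗ₖ (1 : Matrix (Fin q) (Fin q) ℝ))).map (fun x => (x : ℂ))) =
          (1 : Matrix (Fin N) (Fin N) ℂ) ⊗ₖ (S0.map (fun x => (x : ℂ))) -
            (μ : ℂ) • ((H.map (fun x => (x : ℂ))) ⊗ₖ (1 : Matrix (Fin q) (Fin q) ℂ)) := by
        ext ⟨i, j⟩ ⟨k, l⟩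
        simp only [Matrix.map_apply, Matrix.sub_apply, Matrix.smul_apply,
          kroneckerMap_apply, Matrix.one_apply, smul_eq_mul]
        by_cases hik : i = k <;> by_cases hjl : j = l <;>
          simp [hik, hjl] <;> push_cast <;> ring
      rw [hmap, Matrix.sub_mulVec, Matrix.smul_mulVec,
        aux_kron_mulVec, aux_kron_mulVec]
      funext p
      have h1 : (1 : Matrix (Fin N) (Fin N) ℂ).mulVec wC = wC := by
        simp [Matrix.one_mulVec]
      have h2 : (1 : Matrix (Fin q) (Fin q) ℂ).mulVec v = v := by
        simp [Matrix.one_mulVec]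
      simp only [Pi.sub_apply, Pi.smul_apply, smul_eq_mul, h1, h2, hveig, hweigC]
      ring
  -- basic inequality: for every lam in specC S0, 2 * (μ*h) * lam.re > (μ*h)^2
  have main : ∀ lam ∈ specC S0, (μ * h) ^ 2 < 2 * (μ * h) * lam.re := by
    intro lam hlam
    have h1 : ‖lam‖ = 1 := hmod lam hlam
    have h2 : ‖lam - (μ : ℂ) * (h : ℂ)‖ < 1 := hμ _ (key lam hlam)
    have e1 : Complex.normSq lam = 1 := by
      have := congrArg (fun r : ℝ => r ^ 2) h1
      simpa [Complex.sq_norm] using this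
    have e2 : Complex.normSq (lam - (μ : ℂ) * (h : ℂ)) < 1 := by
      have : ‖lam - (μ : ℂ) * (h : ℂ)‖ ^ 2 < 1 ^ 2 := by
        apply pow_lt_pow_left₀ h2 (norm_nonneg _) (by norm_num)
      simpa [Complex.sq_norm] using this
    have e3 : Complex.normSq (lam - (μ : ℂ) * (h : ℂ)) =
        Complex.normSq lam - 2 * (μ * h) * lam.re + (μ * h) ^ 2 := by
      simp [Complex.normSq_apply, Complex.sub_re, Complex.sub_im, Complex.mul_re,
        Complex.mul_im, Complex.ofReal_re, Complex.ofReal_im]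
      ring
    rw [e3, e1] at e2
    linarith
  -- μ * h ≠ 0
  have hspec_ne : (specC S0).Nonempty := by
    have : Nontrivial (Matrix (Fin q) (Fin q) ℂ) := inferInstance
    exact spectrum.nonempty_of_isAlgClosed_of_finiteDimensional ℂ _
  obtain ⟨lam0, hlam0⟩ := hspec_ne
  have hμh_ne : μ * h ≠ 0 := by
    intro hcon
    have := main lam0 hlam0
    rw [hcon] at this
    simp at this
  have hμh_sq : 0 < (μ * h) ^ 2 := by positivity
  rcases lt_or_gt_of_ne hμh_ne with hneg | hposμ
  · right
    intro lam hlam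
    have := main lam hlam
    nlinarith
  · left
    intro lam hlam
    have := main lam hlam
    nlinarith
end
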